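/- Let k ∈ ℕ and let S, T : Fin (k+1) → ℕ be the values given by two substitutions to the closed ε-terms a₀, …, a_k of a set of formulas, and define the order (Reduktionsgrad) of an assignment S by o(S) = Σ_{i=0}^{k} 2^{k−i}·f_S(i), where f_S(i) = 1 if S(i) = 0 and f_S(i) = 0 otherwise. If T is progressive over S, i.e., for every i with S(i) ≠ 0 one has T(i) = S(i), then either o(T) < o(S), or S and T give all the ε-terms the same values (S = T as functions). -/
import Mathlib

/-- The order (Reduktionsgrad) of an assignment `S` of values to the closed
ε-terms `a₀, …, a_k` : `o(S) = Σ_{i=0}^{k} 2^{k-i} · f_S(i)`, where `f_S(i) = 1`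
iff `S i = 0`. -/
def reduktionsgrad (k : ℕ) (S : Fin (k + 1) → ℕ) : ℕ :=
  ∑ i : Fin (k + 1), 2 ^ (k - (i : ℕ)) * (if S i = 0 then 1 else 0)

/-- If `T` is progressive over `S` (every nonzero value of `S` is kept by `T`),
then either `o(T) < o(S)` or `S` and `T` give all ε-terms the same values. -/
theorem progressive_order_decreases (k : ℕ) (S T : Fin (k + 1) → ℕ)
    (hprog : ∀ i : Fin (k + 1), S i ≠ 0 → T i = S i) :
    reduktionsgrad k T < reduktionsgrad k S ∨ S = T := by
  by_cases h : S = T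
  · exact Or.inr h
  · left
    obtain ⟨j, hj⟩ := Function.ne_iff.mp h
    unfold reduktionsgrad
    apply Finset.sum_lt_sum
    · intro i _
      by_cases hi : S i = 0
      · simp only [hi, if_pos rfl, mul_one]
        split <;> simp
      · rw [hprog i hi]
    · refine ⟨j, Finset.mem_univ j, ?_⟩
      have hS : S j = 0 := by
        by_contra hs
        exact hj (hprog j hs).symm
      have hT : T j ≠ 0 := fun ht => hj (by rw [hS, ht])
      simp [hS, hT]
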